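/- Let μ ∈ (0,1), κ ∈ (0, 1−μ), ε ∈ (0,1], and let K : [0,1]×[0,1] → ℝ be continuous and κ-Hölder in its first variable. Then there exists a constant C > 0 (depending only on μ, κ, ε and K) such that for every continuous v : [0,1] → ℝ and all θ₁, θ₂ ∈ [0,1] with θ₁ ≠ θ₂, |(𝒦₂v)(θ₁) − (𝒦₂v)(θ₂)| ≤ C |θ₁ − θ₂|^κ · max_{θ∈[0,1]} |v(θ)|. -/

import Mathlib

open MeasureTheory Set

/-- The weakly singular delay Volterra integral operator
`(𝒦₂v)(t) = ∫₀^{εt} (εt-τ)^{-μ} K(t,τ) v(τ) dτ`. -/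
noncomputable def K2op (μ ε : ℝ) (K : ℝ → ℝ → ℝ) (v : ℝ → ℝ) (t : ℝ) : ℝ :=
  ∫ τ in (0:ℝ)..(ε * t), (ε * t - τ) ^ (-μ) * K t τ * v τ

private lemma rpow_subadd {a b r : ℝ} (ha : 0 ≤ a) (hb : 0 ≤ b) (hr : 0 ≤ r) (hr1 : r ≤ 1) :
    (a + b) ^ r ≤ a ^ r + b ^ r := by
  have h := NNReal.rpow_add_le_add_rpow a.toNNReal b.toNNReal hr hr1
  have h2 := NNReal.coe_le_coe.2 h
  push_cast at h2
  rwa [Real.coe_toNNReal _ ha, Real.coe_toNNReal _ hb] at h2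

private lemma integ_singular {μ : ℝ} (hμ : μ < 1) (c p q : ℝ) :
    IntervalIntegrable (fun τ => (c - τ) ^ (-μ)) volume p q := by
  have h := (intervalIntegral.intervalIntegrable_rpow' (a := c - p) (b := c - q)
    (by linarith : (-1:ℝ) < -μ)).comp_sub_left c
  simpa using h

private lemma intval {μ : ℝ} (hμ : μ < 1) (c p q : ℝ) :
    ∫ τ in p..q, (c - τ) ^ (-μ) = ((c - p) ^ (1 - μ) - (c - q) ^ (1 - μ)) / (1 - μ) := by
  have h1 : (∫ τ in p..q, (c - τ) ^ (-μ)) = ∫ x in (c - q)..(c - p), x ^ (-μ) := by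
    simpa using intervalIntegral.integral_comp_sub_left (a := p) (b := q)
      (fun x : ℝ => x ^ (-μ)) c
  rw [h1, integral_rpow (Or.inl (by linarith : (-1:ℝ) < -μ)),
    show -μ + 1 = 1 - μ by ring]

/-- Hölder-type bound for the weakly singular delay Volterra operator `𝒦₂`:
for `μ ∈ (0,1)`, `κ ∈ (0,1-μ)`, `ε ∈ (0,1]`, and `K` continuous and `κ`-Hölder
in its first variable, there is `C > 0` with
`|(𝒦₂v)(θ₁) - (𝒦₂v)(θ₂)| ≤ C |θ₁-θ₂|^κ · max |v|` for all continuous `v`. -/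
theorem K2_holder_increment_bound (μ κ ε : ℝ) (hμ : μ ∈ Ioo (0:ℝ) 1)
    (hκ : κ ∈ Ioo (0:ℝ) (1 - μ)) (hε : ε ∈ Ioc (0:ℝ) 1) (K : ℝ → ℝ → ℝ)
    (hKcont : ContinuousOn (fun p : ℝ × ℝ => K p.1 p.2) (Icc 0 1 ×ˢ Icc 0 1))
    (Lip : ℝ) (hLip : 0 ≤ Lip)
    (hKH : ∀ θ₁ ∈ Icc (0:ℝ) 1, ∀ θ₂ ∈ Icc (0:ℝ) 1, ∀ s ∈ Icc (0:ℝ) 1,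
      |K θ₁ s - K θ₂ s| ≤ Lip * |θ₁ - θ₂| ^ κ) :
    ∃ C > (0:ℝ), ∀ v : ℝ → ℝ, ContinuousOn v (Icc (0:ℝ) 1) →
      ∀ θ₁ ∈ Icc (0:ℝ) 1, ∀ θ₂ ∈ Icc (0:ℝ) 1, θ₁ ≠ θ₂ →
      |K2op μ ε K v θ₁ - K2op μ ε K v θ₂|
        ≤ C * |θ₁ - θ₂| ^ κ * sSup ((fun θ => |v θ|) '' Icc (0:ℝ) 1) := by
  obtain ⟨hμ0, hμ1⟩ := hμ
  obtain ⟨hκ0, hκ1⟩ := hκ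
  obtain ⟨hε0, hε1⟩ := hε
  obtain ⟨M, hM⟩ := (isCompact_Icc.prod isCompact_Icc).exists_bound_of_continuousOn hKcont
  set M' : ℝ := max M 0 with hM'def
  have hM'0 : (0:ℝ) ≤ M' := le_max_right _ _
  have hMK : ∀ θ ∈ Icc (0:ℝ) 1, ∀ s ∈ Icc (0:ℝ) 1, |K θ s| ≤ M' := by
    intro θ hθ s hs
    exact le_max_of_le_left (hM (θ, s) ⟨hθ, hs⟩)
  have h1μ : (0:ℝ) < 1 - μ := by linarith
  refine ⟨(2 * M' + Lip) / (1 - μ) + 1, by positivity, ?_⟩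
  suffices key : ∀ v : ℝ → ℝ, ContinuousOn v (Icc (0:ℝ) 1) →
      ∀ θ₁ ∈ Icc (0:ℝ) 1, ∀ θ₂ ∈ Icc (0:ℝ) 1, θ₂ ≤ θ₁ →
      |K2op μ ε K v θ₁ - K2op μ ε K v θ₂|
        ≤ ((2 * M' + Lip) / (1 - μ) + 1) * |θ₁ - θ₂| ^ κ
          * sSup ((fun θ => |v θ|) '' Icc (0:ℝ) 1) by
    intro v hv θ₁ h1 θ₂ h2 _
    rcases le_total θ₂ θ₁ with h | h
    · exact key v hv θ₁ h1 θ₂ h2 h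
    · rw [abs_sub_comm (K2op μ ε K v θ₁), abs_sub_comm θ₁]
      exact key v hv θ₂ h2 θ₁ h1 h
  intro v hv θ₁ h1 θ₂ h2 hle
  set Mv := sSup ((fun θ => |v θ|) '' Icc (0:ℝ) 1) with hMvdef
  have hvb : ∀ s ∈ Icc (0:ℝ) 1, |v s| ≤ Mv := by
    intro s hs
    exact le_csSup (isCompact_Icc.image_of_continuousOn hv.abs).bddAbove ⟨s, hs, rfl⟩
  have hMv0 : (0:ℝ) ≤ Mv := le_trans (abs_nonneg _) (hvb 0 (by norm_num))
  rcases eq_or_lt_of_le hle with rfl | hlt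
  · simp [sub_self, Real.zero_rpow (ne_of_gt hκ0)]
  set Δ := θ₁ - θ₂ with hΔdef
  have hΔ0 : 0 < Δ := sub_pos.2 hlt
  have hΔ1 : Δ ≤ 1 := by
    have := h1.2; have := h2.1; simp only [hΔdef]; linarith
  have habs : |θ₁ - θ₂| = Δ := abs_of_pos hΔ0
  set a := ε * θ₂ with hadef
  set b := ε * θ₁ with hbdef
  have ha0 : 0 ≤ a := mul_nonneg hε0.le h2.1
  have hab : a ≤ b := by
    have := mul_le_mul_of_nonneg_left hle hε0.le
    simpa [hadef, hbdef] using this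
  have hb1 : b ≤ 1 := by
    calc b ≤ 1 * 1 := mul_le_mul hε1 h1.2 h1.1 zero_le_one
    _ = 1 := one_mul 1
  have ha1 : a ≤ 1 := le_trans hab hb1
  have hba : b - a = ε * Δ := by rw [hadef, hbdef, hΔdef]; ring
  have hbaΔ : b - a ≤ Δ := by rw [hba]; nlinarith
  have hbanneg : 0 ≤ b - a := by linarith
  -- continuity of slices of K
  have hKslice : ∀ θ ∈ Icc (0:ℝ) 1, ContinuousOn (fun τ => K θ τ) (Icc (0:ℝ) 1) := by
    intro θ hθ
    exact hKcont.comp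
      (Continuous.continuousOn (continuous_const.prodMk continuous_id))
      (fun τ hτ => ⟨hθ, hτ⟩)
  -- integrability of the integrands
  have hint : ∀ (c θ p q : ℝ), θ ∈ Icc (0:ℝ) 1 → uIcc p q ⊆ Icc (0:ℝ) 1 →
      IntervalIntegrable (fun τ => (c - τ) ^ (-μ) * K θ τ * v τ) volume p q := by
    intro c θ p q hθ hsub
    exact ((integ_singular hμ1 c p q).mul_continuousOn
      ((hKslice θ hθ).mono hsub)).mul_continuousOn (hv.mono hsub)
  have hsub0b : uIcc (0:ℝ) b ⊆ Icc (0:ℝ) 1 := by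
    rw [uIcc_of_le (le_trans ha0 hab)]; exact Icc_subset_Icc le_rfl hb1
  have hsub0a : uIcc (0:ℝ) a ⊆ Icc (0:ℝ) 1 := by
    rw [uIcc_of_le ha0]; exact Icc_subset_Icc le_rfl ha1
  have hsubab : uIcc a b ⊆ Icc (0:ℝ) 1 := by
    rw [uIcc_of_le hab]; exact Icc_subset_Icc ha0 hb1
  set f₁ : ℝ → ℝ := fun τ => (b - τ) ^ (-μ) * K θ₁ τ * v τ with hf₁
  set f₂ : ℝ → ℝ := fun τ => (a - τ) ^ (-μ) * K θ₂ τ * v τ with hf₂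
  have hi1a : IntervalIntegrable f₁ volume 0 a := hint b θ₁ 0 a h1 hsub0a
  have hi1ab : IntervalIntegrable f₁ volume a b := hint b θ₁ a b h1 hsubab
  have hi2a : IntervalIntegrable f₂ volume 0 a := hint a θ₂ 0 a h2 hsub0a
  -- splitting
  have e1 : K2op μ ε K v θ₁ = ∫ τ in (0:ℝ)..b, f₁ τ := rfl
  have e2 : K2op μ ε K v θ₂ = ∫ τ in (0:ℝ)..a, f₂ τ := rfl
  have hadd := intervalIntegral.integral_add_adjacent_intervals hi1a hi1ab
  have hsubint := intervalIntegral.integral_sub hi1a hi2a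
  have hsplit : K2op μ ε K v θ₁ - K2op μ ε K v θ₂
      = (∫ τ in (0:ℝ)..a, (f₁ τ - f₂ τ)) + ∫ τ in a..b, f₁ τ := by
    rw [e1, e2, ← hadd, hsubint]; ring
  -- the tail term
  have hY : |∫ τ in a..b, f₁ τ| ≤ M' * Mv * ((b - a) ^ (1 - μ) / (1 - μ)) := by
    have hg : IntervalIntegrable (fun τ => (b - τ) ^ (-μ) * (M' * Mv)) volume a b :=
      (integ_singular hμ1 b a b).mul_const _
    have hae : ∀ᵐ t ∂(volume.restrict (Set.uIoc a b)), ‖f₁ t‖ ≤ (b - t) ^ (-μ) * (M' * Mv) := by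
      filter_upwards [ae_restrict_mem measurableSet_uIoc] with t ht
      have htI : t ∈ Ioc a b := by rwa [uIoc_of_le hab] at ht
      have ht01 : t ∈ Icc (0:ℝ) 1 := ⟨le_trans ha0 htI.1.le, le_trans htI.2 hb1⟩
      have hbt : 0 ≤ b - t := sub_nonneg.2 htI.2
      have h1' : ‖f₁ t‖ = (b - t) ^ (-μ) * (|K θ₁ t| * |v t|) := by
        rw [hf₁]
        simp only [Real.norm_eq_abs, abs_mul, abs_of_nonneg (Real.rpow_nonneg hbt _)]
        ring
      rw [h1']
      refine mul_le_mul_of_nonneg_left ?_ (Real.rpow_nonneg hbt _)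
      exact mul_le_mul (hMK θ₁ h1 t ht01) (hvb t ht01) (abs_nonneg _) hM'0
    have := intervalIntegral.norm_integral_le_abs_of_norm_le hae hg
    rw [intervalIntegral.integral_mul_const, intval hμ1 b a b, sub_self,
      Real.zero_rpow (ne_of_gt h1μ), sub_zero] at this
    calc |∫ τ in a..b, f₁ τ| ≤ |(b - a) ^ (1 - μ) / (1 - μ) * (M' * Mv)| := this
      _ = M' * Mv * ((b - a) ^ (1 - μ) / (1 - μ)) := by
          rw [abs_of_nonneg (by positivity)]
          ring
  -- the difference term
  set c₁ : ℝ := M' * Mv + Lip * Δ ^ κ * Mv with hc₁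
  set c₂ : ℝ := M' * Mv with hc₂
  have hc₁0 : 0 ≤ c₁ := by positivity
  have hc₂0 : 0 ≤ c₂ := by positivity
  have hX : |∫ τ in (0:ℝ)..a, (f₁ τ - f₂ τ)|
      ≤ (c₁ * a ^ (1 - μ) - c₂ * b ^ (1 - μ) + c₂ * (b - a) ^ (1 - μ)) / (1 - μ) := by
    have hg : IntervalIntegrable
        (fun τ => c₁ * (a - τ) ^ (-μ) - c₂ * (b - τ) ^ (-μ)) volume 0 a :=
      ((integ_singular hμ1 a 0 a).const_mul c₁).sub ((integ_singular hμ1 b 0 a).const_mul c₂)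
    have hane : ∀ᵐ t ∂(volume.restrict (Set.uIoc (0:ℝ) a)), t ≠ a := by
      refine ae_iff.2 ?_
      simpa [not_not, Set.setOf_eq_eq_singleton] using
        measure_singleton (μ := volume.restrict (Set.uIoc (0:ℝ) a)) a
    have hae : ∀ᵐ t ∂(volume.restrict (Set.uIoc (0:ℝ) a)),
        ‖f₁ t - f₂ t‖ ≤ c₁ * (a - t) ^ (-μ) - c₂ * (b - t) ^ (-μ) := by
      filter_upwards [ae_restrict_mem measurableSet_uIoc, hane] with t ht hne
      have htI : t ∈ Ioc 0 a := by rwa [uIoc_of_le ha0] at ht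
      have htlt : t < a := lt_of_le_of_ne htI.2 hne
      have ht01 : t ∈ Icc (0:ℝ) 1 := ⟨htI.1.le, le_trans htI.2 ha1⟩
      have hat : 0 < a - t := sub_pos.2 htlt
      have hbt : 0 < b - t := lt_of_lt_of_le hat (by linarith)
      have hBA : (b - t) ^ (-μ) ≤ (a - t) ^ (-μ) :=
        Real.rpow_le_rpow_of_nonpos hat (by linarith) (by linarith)
      have hdecomp : f₁ t - f₂ t
          = ((b - t) ^ (-μ) - (a - t) ^ (-μ)) * (K θ₁ t * v t)
            + (a - t) ^ (-μ) * ((K θ₁ t - K θ₂ t) * v t) := by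
        rw [hf₁, hf₂]; ring
      have hfirst : |((b - t) ^ (-μ) - (a - t) ^ (-μ)) * (K θ₁ t * v t)|
          ≤ ((a - t) ^ (-μ) - (b - t) ^ (-μ)) * (M' * Mv) := by
        rw [abs_mul, abs_sub_comm, abs_of_nonneg (sub_nonneg.2 hBA)]
        refine mul_le_mul_of_nonneg_left ?_ (sub_nonneg.2 hBA)
        rw [abs_mul]
        exact mul_le_mul (hMK θ₁ h1 t ht01) (hvb t ht01) (abs_nonneg _) hM'0
      have hsecond : |(a - t) ^ (-μ) * ((K θ₁ t - K θ₂ t) * v t)|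
          ≤ (a - t) ^ (-μ) * (Lip * Δ ^ κ * Mv) := by
        rw [abs_mul, abs_of_nonneg (Real.rpow_nonneg hat.le _)]
        refine mul_le_mul_of_nonneg_left ?_ (Real.rpow_nonneg hat.le _)
        rw [abs_mul]
        have hKd : |K θ₁ t - K θ₂ t| ≤ Lip * Δ ^ κ := by
          have := hKH θ₁ h1 θ₂ h2 t ht01
          rwa [habs] at this
        exact mul_le_mul hKd (hvb t ht01) (abs_nonneg _) (by positivity)
      calc ‖f₁ t - f₂ t‖
          ≤ |((b - t) ^ (-μ) - (a - t) ^ (-μ)) * (K θ₁ t * v t)|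
            + |(a - t) ^ (-μ) * ((K θ₁ t - K θ₂ t) * v t)| := by
            rw [Real.norm_eq_abs, hdecomp]; exact abs_add_le _ _
        _ ≤ ((a - t) ^ (-μ) - (b - t) ^ (-μ)) * (M' * Mv)
            + (a - t) ^ (-μ) * (Lip * Δ ^ κ * Mv) := add_le_add hfirst hsecond
        _ = c₁ * (a - t) ^ (-μ) - c₂ * (b - t) ^ (-μ) := by rw [hc₁, hc₂]; ring
    have hnorm := intervalIntegral.norm_integral_le_abs_of_norm_le hae hg
    have hgval : (∫ τ in (0:ℝ)..a, (c₁ * (a - τ) ^ (-μ) - c₂ * (b - τ) ^ (-μ)))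
        = (c₁ * a ^ (1 - μ) - c₂ * b ^ (1 - μ) + c₂ * (b - a) ^ (1 - μ)) / (1 - μ) := by
      rw [intervalIntegral.integral_sub ((integ_singular hμ1 a 0 a).const_mul c₁)
        ((integ_singular hμ1 b 0 a).const_mul c₂),
        intervalIntegral.integral_const_mul, intervalIntegral.integral_const_mul,
        intval hμ1 a 0 a, intval hμ1 b 0 a, sub_zero, sub_zero, sub_self,
        Real.zero_rpow (ne_of_gt h1μ), sub_zero]
      field_simp
      ring
    rw [hgval] at hnorm
    -- show the explicit value is nonnegative, to remove the absolute value
    have hsubadd : b ^ (1 - μ) ≤ a ^ (1 - μ) + (b - a) ^ (1 - μ) := by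
      have := rpow_subadd ha0 hbanneg h1μ.le (by linarith : 1 - μ ≤ 1)
      rwa [show a + (b - a) = b by ring] at this
    have hnum0 : 0 ≤ c₁ * a ^ (1 - μ) - c₂ * b ^ (1 - μ) + c₂ * (b - a) ^ (1 - μ) := by
      have e : c₁ * a ^ (1 - μ) - c₂ * b ^ (1 - μ) + c₂ * (b - a) ^ (1 - μ)
          = c₂ * (a ^ (1 - μ) + (b - a) ^ (1 - μ) - b ^ (1 - μ))
            + (Lip * Δ ^ κ * Mv) * a ^ (1 - μ) := by
        rw [hc₁, hc₂]; ring
      rw [e]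
      have h2' : 0 ≤ (Lip * Δ ^ κ * Mv) * a ^ (1 - μ) := by
        have := Real.rpow_nonneg ha0 (1 - μ); positivity
      have h3' : 0 ≤ c₂ * (a ^ (1 - μ) + (b - a) ^ (1 - μ) - b ^ (1 - μ)) :=
        mul_nonneg hc₂0 (by linarith)
      linarith
    calc |∫ τ in (0:ℝ)..a, (f₁ τ - f₂ τ)|
        ≤ |(c₁ * a ^ (1 - μ) - c₂ * b ^ (1 - μ) + c₂ * (b - a) ^ (1 - μ)) / (1 - μ)| := hnorm
      _ = (c₁ * a ^ (1 - μ) - c₂ * b ^ (1 - μ) + c₂ * (b - a) ^ (1 - μ)) / (1 - μ) :=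
          abs_of_nonneg (div_nonneg hnum0 h1μ.le)
  -- assemble the estimates
  have hΔκ0 : 0 ≤ Δ ^ κ := Real.rpow_nonneg hΔ0.le _
  have hba_k : (b - a) ^ (1 - μ) ≤ Δ ^ κ := by
    calc (b - a) ^ (1 - μ) ≤ Δ ^ (1 - μ) := Real.rpow_le_rpow hbanneg hbaΔ h1μ.le
      _ ≤ Δ ^ κ := Real.rpow_le_rpow_of_exponent_ge hΔ0 hΔ1 (by linarith)
  have ha_one : a ^ (1 - μ) ≤ 1 := Real.rpow_le_one ha0 ha1 h1μ.le
  have hord : a ^ (1 - μ) ≤ b ^ (1 - μ) := Real.rpow_le_rpow ha0 hab h1μ.le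
  -- bound on the numerator of the X term
  have hXnum : c₁ * a ^ (1 - μ) - c₂ * b ^ (1 - μ) + c₂ * (b - a) ^ (1 - μ)
      ≤ (M' + Lip) * Δ ^ κ * Mv := by
    have e : c₁ * a ^ (1 - μ) - c₂ * b ^ (1 - μ) + c₂ * (b - a) ^ (1 - μ)
        = c₂ * (a ^ (1 - μ) - b ^ (1 - μ) + (b - a) ^ (1 - μ))
          + (Lip * Δ ^ κ * Mv) * a ^ (1 - μ) := by
      rw [hc₁, hc₂]; ring
    rw [e]
    have h1' : c₂ * (a ^ (1 - μ) - b ^ (1 - μ) + (b - a) ^ (1 - μ)) ≤ c₂ * Δ ^ κ :=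
      mul_le_mul_of_nonneg_left (by linarith) hc₂0
    have h2' : (Lip * Δ ^ κ * Mv) * a ^ (1 - μ) ≤ Lip * Δ ^ κ * Mv :=
      mul_le_of_le_one_right (by positivity) ha_one
    calc c₂ * (a ^ (1 - μ) - b ^ (1 - μ) + (b - a) ^ (1 - μ))
          + (Lip * Δ ^ κ * Mv) * a ^ (1 - μ)
        ≤ c₂ * Δ ^ κ + Lip * Δ ^ κ * Mv := add_le_add h1' h2'
      _ = (M' + Lip) * Δ ^ κ * Mv := by rw [hc₂]; ring
  have hYfin : |∫ τ in a..b, f₁ τ| ≤ M' * Δ ^ κ * Mv / (1 - μ) := by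
    calc |∫ τ in a..b, f₁ τ| ≤ M' * Mv * ((b - a) ^ (1 - μ) / (1 - μ)) := hY
      _ ≤ M' * Mv * (Δ ^ κ / (1 - μ)) := by
          refine mul_le_mul_of_nonneg_left ?_ (mul_nonneg hM'0 hMv0)
          exact (div_le_div_iff_of_pos_right h1μ).2 hba_k
      _ = M' * Δ ^ κ * Mv / (1 - μ) := by ring
  have hXfin : |∫ τ in (0:ℝ)..a, (f₁ τ - f₂ τ)| ≤ (M' + Lip) * Δ ^ κ * Mv / (1 - μ) := by
    refine hX.trans ?_
    exact (div_le_div_iff_of_pos_right h1μ).2 hXnum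
  rw [habs, hsplit]
  calc |(∫ τ in (0:ℝ)..a, (f₁ τ - f₂ τ)) + ∫ τ in a..b, f₁ τ|
      ≤ |∫ τ in (0:ℝ)..a, (f₁ τ - f₂ τ)| + |∫ τ in a..b, f₁ τ| := abs_add_le _ _
    _ ≤ (M' + Lip) * Δ ^ κ * Mv / (1 - μ) + M' * Δ ^ κ * Mv / (1 - μ) :=
        add_le_add hXfin hYfin
    _ = (2 * M' + Lip) / (1 - μ) * Δ ^ κ * Mv := by field_simp; ring
    _ ≤ ((2 * M' + Lip) / (1 - μ) + 1) * Δ ^ κ * Mv := by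
        have h0 : 0 ≤ Δ ^ κ * Mv := mul_nonneg hΔκ0 hMv0
        have h1'' : (2 * M' + Lip) / (1 - μ) ≤ (2 * M' + Lip) / (1 - μ) + 1 := by linarith
        calc (2 * M' + Lip) / (1 - μ) * Δ ^ κ * Mv
            = (2 * M' + Lip) / (1 - μ) * (Δ ^ κ * Mv) := by ring
          _ ≤ ((2 * M' + Lip) / (1 - μ) + 1) * (Δ ^ κ * Mv) :=
              mul_le_mul_of_nonneg_right h1'' h0
          _ = ((2 * M' + Lip) / (1 - μ) + 1) * Δ ^ κ * Mv := by ring
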